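/- Fix t ∈ (0,1), ω ∈ ℂ with |ω|=1, and τ ∈ ℂ with |τ|=1. The function F(x₁,x₂) = (t·conj(ω)x₁ + (1-t)x₂ + τ·conj(ω)x₁x₂)/(1 + τ((1-t)·conj(ω)x₁ + t·x₂)) is a well-defined holomorphic map from 𝔻² to the closed unit disc with |F(x)| < 1 for x ∈ 𝔻²; moreover F(0,0) = 0. -/

import Mathlib

open Complex Metric


lemma key (t : ℝ) (ht0 : 0 < t) (ht1 : t < 1) (τ u v : ℂ)
    (hτ : ‖τ‖ = 1) (hu : ‖u‖ < 1) (hv : ‖v‖ < 1) :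
    ‖(t : ℂ) * u + (1 - t) * v + τ * u * v‖ <
      ‖1 + τ * ((1 - t) * u + (t : ℂ) * v)‖ := by
  set N : ℂ := (t : ℂ) * u + (1 - t) * v + τ * u * v with hN
  set D : ℂ := 1 + τ * ((1 - t) * u + (t : ℂ) * v) with hD
  have hττ : τ * (starRingEnd ℂ) τ = 1 := by
    rw [Complex.mul_conj]
    norm_cast
    rw [← Complex.sq_norm, hτ]; norm_num
  set W : ℂ := (1 - t) * (1 - v * (starRingEnd ℂ) v) * u + (t : ℂ) * (1 - u * (starRingEnd ℂ) u) * v with hW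
  have hid : D * (starRingEnd ℂ) D - N * (starRingEnd ℂ) N =
      ((1 : ℂ) - t) * (1 - v * (starRingEnd ℂ) v) * (1 + u * (starRingEnd ℂ) u) +
      (t : ℂ) * (1 - u * (starRingEnd ℂ) u) * (1 + v * (starRingEnd ℂ) v) +
      (τ * W + (starRingEnd ℂ) (τ * W)) := by
    simp only [hN, hD, hW, map_add, map_mul, map_one, map_sub, Complex.conj_conj,
      Complex.conj_ofReal]
    linear_combination (((1 - (t:ℂ)) * u + t * v) * ((1 - (t:ℂ)) * (starRingEnd ℂ) u + t * (starRingEnd ℂ) v) - u * v * (starRingEnd ℂ) u * (starRingEnd ℂ) v) * hττ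
  set a := ‖u‖ with ha
  set b := ‖v‖ with hb
  have h1 : u * (starRingEnd ℂ) u = ((a ^ 2 : ℝ) : ℂ) := by
    rw [Complex.mul_conj]; norm_cast; rw [← Complex.sq_norm]
  have h2 : v * (starRingEnd ℂ) v = ((b ^ 2 : ℝ) : ℂ) := by
    rw [Complex.mul_conj]; norm_cast; rw [← Complex.sq_norm]
  rw [h1, h2] at hid
  have hid2 : Complex.normSq D - Complex.normSq N =
      (1 - t) * (1 - b ^ 2) * (1 + a ^ 2) + t * (1 - a ^ 2) * (1 + b ^ 2) +
        2 * (τ * W).re := by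
    have : (((Complex.normSq D - Complex.normSq N : ℝ)) : ℂ) =
        ((((1 - t) * (1 - b ^ 2) * (1 + a ^ 2) + t * (1 - a ^ 2) * (1 + b ^ 2) +
          2 * (τ * W).re : ℝ)) : ℂ) := by
      push_cast
      rw [← Complex.mul_conj, ← Complex.mul_conj]
      have hac : τ * W + (starRingEnd ℂ) (τ * W) = 2 * (((τ * W).re : ℝ) : ℂ) := by
        rw [Complex.add_conj]; push_cast; ring
      push_cast at hid
      linear_combination hid + hac
    exact_mod_cast this
  -- bound on W
  have hWabs : ‖W‖ ≤ (1 - t) * (1 - b ^ 2) * a + t * (1 - a ^ 2) * b := by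
    have hb1 : (0:ℝ) ≤ 1 - b ^ 2 := by nlinarith [norm_nonneg v]
    have ha1 : (0:ℝ) ≤ 1 - a ^ 2 := by nlinarith [norm_nonneg u]
    have hWeq : W = (((1 - t) * (1 - b ^ 2) : ℝ) : ℂ) * u + ((t * (1 - a ^ 2) : ℝ) : ℂ) * v := by
      rw [hW, h1, h2]; push_cast; ring
    rw [hWeq]
    refine le_trans (norm_add_le _ _) ?_
    rw [norm_mul, norm_mul, Complex.norm_real, Complex.norm_real, Real.norm_eq_abs, Real.norm_eq_abs]
    rw [_root_.abs_of_nonneg (by nlinarith : (0:ℝ) ≤ (1 - t) * (1 - b ^ 2)),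
      _root_.abs_of_nonneg (by nlinarith : (0:ℝ) ≤ t * (1 - a ^ 2)), ← ha, ← hb]
  have hre : -((1 - t) * (1 - b ^ 2) * a + t * (1 - a ^ 2) * b) ≤ (τ * W).re := by
    have h3 : ‖τ * W‖ = ‖W‖ := by rw [norm_mul, hτ, one_mul]
    have h4 : -(‖τ * W‖) ≤ (τ * W).re :=
      (abs_le.1 (Complex.abs_re_le_norm _)).1
    rw [h3] at h4
    linarith
  have ha0 : 0 ≤ a := norm_nonneg u
  have hb0 : 0 ≤ b := norm_nonneg v
  have e1 : 0 < (1 - t) * (1 - b ^ 2) * (1 - a) ^ 2 :=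
    mul_pos (mul_pos (by linarith) (by nlinarith)) (pow_pos (by linarith) 2)
  have e2 : 0 ≤ t * (1 - a ^ 2) * (1 - b) ^ 2 :=
    mul_nonneg (mul_nonneg (by linarith) (by nlinarith)) (sq_nonneg _)
  have ekey : (1 - t) * (1 - b ^ 2) * (1 + a ^ 2) + t * (1 - a ^ 2) * (1 + b ^ 2) -
      2 * ((1 - t) * (1 - b ^ 2) * a + t * (1 - a ^ 2) * b) =
      (1 - t) * (1 - b ^ 2) * (1 - a) ^ 2 + t * (1 - a ^ 2) * (1 - b) ^ 2 := by ring
  have hpos : Complex.normSq N < Complex.normSq D := by linarith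
  have hsq : ‖N‖ ^ 2 < ‖D‖ ^ 2 := by
    rw [Complex.sq_norm, Complex.sq_norm]; exact hpos
  exact lt_of_pow_lt_pow_left₀ 2 (norm_nonneg D) hsq
theorem F_well_defined (t : ℝ) (ht0 : 0 < t) (ht1 : t < 1) (ω τ : ℂ)
    (hω : ‖ω‖ = 1) (hτ : ‖τ‖ = 1)
    (F : ℂ × ℂ → ℂ)
    (hF : ∀ x : ℂ × ℂ, F x = ((t : ℂ) * (starRingEnd ℂ) ω * x.1 + (1 - t) * x.2 +
      τ * (starRingEnd ℂ) ω * x.1 * x.2) /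
      (1 + τ * ((1 - t) * (starRingEnd ℂ) ω * x.1 + (t : ℂ) * x.2))) :
    (∀ x ∈ ball (0 : ℂ) 1 ×ˢ ball (0 : ℂ) 1,
        1 + τ * ((1 - t) * (starRingEnd ℂ) ω * x.1 + (t : ℂ) * x.2) ≠ 0) ∧
    DifferentiableOn ℂ F (ball (0 : ℂ) 1 ×ˢ ball (0 : ℂ) 1) ∧
    (∀ x ∈ ball (0 : ℂ) 1 ×ˢ ball (0 : ℂ) 1, ‖F x‖ < 1) ∧
    F (0, 0) = 0 := by
  have habs : ∀ x : ℂ × ℂ, x ∈ Metric.ball (0 : ℂ) 1 ×ˢ Metric.ball (0 : ℂ) 1 →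
      ‖(starRingEnd ℂ) ω * x.1‖ < 1 ∧ ‖x.2‖ < 1 := by
    intro x hx
    rw [Set.mem_prod, Metric.mem_ball, Metric.mem_ball, dist_zero_right, dist_zero_right] at hx
    refine ⟨?_, hx.2⟩
    rw [norm_mul, Complex.norm_conj, hω, one_mul]
    exact hx.1
  have hlt : ∀ x : ℂ × ℂ, x ∈ Metric.ball (0 : ℂ) 1 ×ˢ Metric.ball (0 : ℂ) 1 →
      ‖(t : ℂ) * (starRingEnd ℂ) ω * x.1 + (1 - t) * x.2 +
        τ * (starRingEnd ℂ) ω * x.1 * x.2‖ <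
      ‖1 + τ * ((1 - t) * (starRingEnd ℂ) ω * x.1 + (t : ℂ) * x.2)‖ := by
    intro x hx
    obtain ⟨h1, h2⟩ := habs x hx
    have := key t ht0 ht1 τ ((starRingEnd ℂ) ω * x.1) x.2 hτ h1 h2
    convert this using 2 <;> ring
  have hden : ∀ x ∈ Metric.ball (0 : ℂ) 1 ×ˢ Metric.ball (0 : ℂ) 1,
      1 + τ * ((1 - t) * (starRingEnd ℂ) ω * x.1 + (t : ℂ) * x.2) ≠ 0 := by
    intro x hx h0
    have := hlt x hx
    rw [h0, norm_zero] at this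
    exact absurd this (norm_nonneg _).not_gt
  refine ⟨hden, ?_, ?_, ?_⟩
  · have : DifferentiableOn ℂ (fun x : ℂ × ℂ => ((t : ℂ) * (starRingEnd ℂ) ω * x.1 +
        (1 - t) * x.2 + τ * (starRingEnd ℂ) ω * x.1 * x.2) /
        (1 + τ * ((1 - t) * (starRingEnd ℂ) ω * x.1 + (t : ℂ) * x.2)))
        (Metric.ball (0 : ℂ) 1 ×ˢ Metric.ball (0 : ℂ) 1) := by
      have h1 : DifferentiableOn ℂ (fun x : ℂ × ℂ => (t : ℂ) * (starRingEnd ℂ) ω * x.1 +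
          (1 - t) * x.2 + τ * (starRingEnd ℂ) ω * x.1 * x.2)
          (Metric.ball (0 : ℂ) 1 ×ˢ Metric.ball (0 : ℂ) 1) := by
        apply Differentiable.differentiableOn; fun_prop
      have h2 : DifferentiableOn ℂ (fun x : ℂ × ℂ =>
          1 + τ * ((1 - t) * (starRingEnd ℂ) ω * x.1 + (t : ℂ) * x.2))
          (Metric.ball (0 : ℂ) 1 ×ˢ Metric.ball (0 : ℂ) 1) := by
        apply Differentiable.differentiableOn; fun_prop
      simp only [div_eq_mul_inv]
      exact h1.mul (h2.inv hden)
    exact this.congr (fun x _ => hF x)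
  · intro x hx
    rw [hF, norm_div]
    rw [div_lt_one (by
      have := hden x hx
      exact norm_pos_iff.2 this)]
    exact hlt x hx
  · rw [hF]; simp
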